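/- The first-order theory of algebraic (co)datatypes is undecidable: there exists a (co)datatype signature (one may take the datatypes bool = True | False, bitstring = e | 0(tail₀: bitstring) | 1(tail₁: bitstring), and dummy = f(b₁: bitstring, b₂: bitstring) | g(h: bool)) such that no algorithm decides, given a first-order sentence over this signature, whether the sentence is valid in the theory of (co)datatypes; equivalently, satisfiability of first-order formulae in this theory is undecidable. The same holds when the declarations are read as codatatype declarations. -/

import Mathlib

set_option linter.unusedVariables false

/-! The concrete (co)datatype signature
`bool = True | False`,
`bitstring = e | 0(tail₀: bitstring) | 1(tail₁: bitstring)`,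
`dummy = f(b₁: bitstring, b₂: bitstring) | g(h: bool)`.
As datatypes, `bool` is interpreted as `Bool`, `bitstring` as the finite bit
strings `List Bool` (`0` is `false`, `1` is `true`, a string is represented with
its first bit at the head) and `dummy` as `(List Bool × List Bool) ⊕ Bool`. -/

/-- Finite bit strings: the interpretation of the datatype `bitstring`. -/
abbrev Bits := List Bool

/-- The interpretation of the datatype `dummy`: either `f(b₁, b₂)` or `g(h)`. -/
abbrev Dummy := (Bits × Bits) ⊕ Bool

mutual
/-- Terms of sort `bool`. -/
inductive TB : Type
  | var (n : ℕ) : TB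
  | tt : TB
  | ff : TB
  | selH (t : TD) : TB
/-- Terms of sort `bitstring`. -/
inductive TS : Type
  | var (n : ℕ) : TS
  | eps : TS
  | b0 (t : TS) : TS
  | b1 (t : TS) : TS
  | selT0 (t : TS) : TS
  | selT1 (t : TS) : TS
  | selB1 (t : TD) : TS
  | selB2 (t : TD) : TS
/-- Terms of sort `dummy`. -/
inductive TD : Type
  | var (n : ℕ) : TD
  | fc (a b : TS) : TD
  | gc (b : TB) : TD
end

/-- First-order formulae over the signature, with sorted variables and
quantifiers. -/
inductive Fm : Type
  | eqB (a b : TB) : Fm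
  | eqS (a b : TS) : Fm
  | eqD (a b : TD) : Fm
  | not (φ : Fm) : Fm
  | and (φ ψ : Fm) : Fm
  | or (φ ψ : Fm) : Fm
  | imp (φ ψ : Fm) : Fm
  | exB (n : ℕ) (φ : Fm) : Fm
  | exS (n : ℕ) (φ : Fm) : Fm
  | exD (n : ℕ) (φ : Fm) : Fm
  | allB (n : ℕ) (φ : Fm) : Fm
  | allS (n : ℕ) (φ : Fm) : Fm
  | allD (n : ℕ) (φ : Fm) : Fm

/-- A structure of datatypes over this signature (standard selector semantics):
the domains and constructors are fixed; the selectors `tail₀, tail₁` (of the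
`bitstring` constructors `0` and `1`) and `b₁, b₂, h` (of the `dummy`
constructors `f` and `g`) are arbitrary functions satisfying the selector
equations on trees built with the right constructor. -/
structure Model where
  t0 : Bits → Bits
  t1 : Bits → Bits
  s1 : Dummy → Bits
  s2 : Dummy → Bits
  sh : Dummy → Bool
  ht0 : ∀ t : Bits, t0 (false :: t) = t
  ht1 : ∀ t : Bits, t1 (true :: t) = t
  hs1 : ∀ a b : Bits, s1 (Sum.inl (a, b)) = a
  hs2 : ∀ a b : Bits, s2 (Sum.inl (a, b)) = b
  hsh : ∀ b : Bool, sh (Sum.inr b) = b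

/-- A valuation of the sorted variables. -/
structure Valn where
  vb : ℕ → Bool
  vs : ℕ → Bits
  vd : ℕ → Dummy

mutual
/-- Evaluation of `bool` terms. -/
def evalB (M : Model) (ρ : Valn) : TB → Bool
  | .var n => ρ.vb n
  | .tt => true
  | .ff => false
  | .selH t => M.sh (evalD M ρ t)
/-- Evaluation of `bitstring` terms. -/
def evalS (M : Model) (ρ : Valn) : TS → Bits
  | .var n => ρ.vs n
  | .eps => []
  | .b0 t => false :: evalS M ρ t
  | .b1 t => true :: evalS M ρ t
  | .selT0 t => M.t0 (evalS M ρ t)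
  | .selT1 t => M.t1 (evalS M ρ t)
  | .selB1 t => M.s1 (evalD M ρ t)
  | .selB2 t => M.s2 (evalD M ρ t)
/-- Evaluation of `dummy` terms. -/
def evalD (M : Model) (ρ : Valn) : TD → Dummy
  | .var n => ρ.vd n
  | .fc a b => Sum.inl (evalS M ρ a, evalS M ρ b)
  | .gc b => Sum.inr (evalB M ρ b)
end

/-- Satisfaction of a formula in a structure of datatypes under a valuation. -/
def Sat (M : Model) (ρ : Valn) : Fm → Prop
  | .eqB a b => evalB M ρ a = evalB M ρ b
  | .eqS a b => evalS M ρ a = evalS M ρ b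
  | .eqD a b => evalD M ρ a = evalD M ρ b
  | .not φ => ¬ Sat M ρ φ
  | .and φ ψ => Sat M ρ φ ∧ Sat M ρ ψ
  | .or φ ψ => Sat M ρ φ ∨ Sat M ρ ψ
  | .imp φ ψ => Sat M ρ φ → Sat M ρ ψ
  | .exB n φ => ∃ b : Bool, Sat M { ρ with vb := Function.update ρ.vb n b } φ
  | .exS n φ => ∃ s : Bits, Sat M { ρ with vs := Function.update ρ.vs n s } φ
  | .exD n φ => ∃ d : Dummy, Sat M { ρ with vd := Function.update ρ.vd n d } φ
  | .allB n φ => ∀ b : Bool, Sat M { ρ with vb := Function.update ρ.vb n b } φ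
  | .allS n φ => ∀ s : Bits, Sat M { ρ with vs := Function.update ρ.vs n s } φ
  | .allD n φ => ∀ d : Dummy, Sat M { ρ with vd := Function.update ρ.vd n d } φ

/-- Validity in the theory of datatypes: truth in every structure under every
valuation. -/
def ValidData (φ : Fm) : Prop := ∀ (M : Model) (ρ : Valn), Sat M ρ φ

/-- Satisfiability in the theory of datatypes. -/
def SatData (φ : Fm) : Prop := ∃ (M : Model) (ρ : Valn), Sat M ρ φ

/-! The same declarations read as *codatatype* declarations: `bitstring` is then
interpreted as the finite or infinite bit streams. -/

/-- Finite or infinite bit streams: the interpretation of the codatatype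
`bitstring`. A stream is a function `ℕ → Option Bool` that, once undefined,
stays undefined. -/
def CoBits : Type := { f : ℕ → Option Bool // ∀ n, f n = none → f (n + 1) = none }

/-- The empty bit stream (the constructor `e`). -/
def CoBits.nil : CoBits := ⟨fun _ => none, fun _ _ => rfl⟩

/-- Prepending a bit to a bit stream (the constructors `0` and `1`). -/
def CoBits.cons (b : Bool) (t : CoBits) : CoBits :=
  ⟨fun n => match n with
    | 0 => some b
    | n + 1 => t.1 n,
   by
     intro n h
     match n with
     | 0 => exact absurd h (by simp)
     | n + 1 => exact t.2 n h⟩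

/-- The interpretation of the codatatype `dummy`. -/
abbrev CoDummy := (CoBits × CoBits) ⊕ Bool

/-- A structure of codatatypes over this signature (standard selector
semantics). -/
structure CoModel where
  t0 : CoBits → CoBits
  t1 : CoBits → CoBits
  s1 : CoDummy → CoBits
  s2 : CoDummy → CoBits
  sh : CoDummy → Bool
  ht0 : ∀ t : CoBits, t0 (CoBits.cons false t) = t
  ht1 : ∀ t : CoBits, t1 (CoBits.cons true t) = t
  hs1 : ∀ a b : CoBits, s1 (Sum.inl (a, b)) = a
  hs2 : ∀ a b : CoBits, s2 (Sum.inl (a, b)) = b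
  hsh : ∀ b : Bool, sh (Sum.inr b) = b

/-- A valuation of the sorted variables (codatatype version). -/
structure CoValn where
  vb : ℕ → Bool
  vs : ℕ → CoBits
  vd : ℕ → CoDummy

mutual
/-- Evaluation of `bool` terms (codatatype version). -/
def coevalB (M : CoModel) (ρ : CoValn) : TB → Bool
  | .var n => ρ.vb n
  | .tt => true
  | .ff => false
  | .selH t => M.sh (coevalD M ρ t)
/-- Evaluation of `bitstring` terms (codatatype version). -/
def coevalS (M : CoModel) (ρ : CoValn) : TS → CoBits
  | .var n => ρ.vs n
  | .eps => CoBits.nil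
  | .b0 t => CoBits.cons false (coevalS M ρ t)
  | .b1 t => CoBits.cons true (coevalS M ρ t)
  | .selT0 t => M.t0 (coevalS M ρ t)
  | .selT1 t => M.t1 (coevalS M ρ t)
  | .selB1 t => M.s1 (coevalD M ρ t)
  | .selB2 t => M.s2 (coevalD M ρ t)
/-- Evaluation of `dummy` terms (codatatype version). -/
def coevalD (M : CoModel) (ρ : CoValn) : TD → CoDummy
  | .var n => ρ.vd n
  | .fc a b => Sum.inl (coevalS M ρ a, coevalS M ρ b)
  | .gc b => Sum.inr (coevalB M ρ b)
end

/-- Satisfaction of a formula in a structure of codatatypes. -/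
def CoSat (M : CoModel) (ρ : CoValn) : Fm → Prop
  | .eqB a b => coevalB M ρ a = coevalB M ρ b
  | .eqS a b => coevalS M ρ a = coevalS M ρ b
  | .eqD a b => coevalD M ρ a = coevalD M ρ b
  | .not φ => ¬ CoSat M ρ φ
  | .and φ ψ => CoSat M ρ φ ∧ CoSat M ρ ψ
  | .or φ ψ => CoSat M ρ φ ∨ CoSat M ρ ψ
  | .imp φ ψ => CoSat M ρ φ → CoSat M ρ ψ
  | .exB n φ => ∃ b : Bool, CoSat M { ρ with vb := Function.update ρ.vb n b } φ
  | .exS n φ => ∃ s : CoBits, CoSat M { ρ with vs := Function.update ρ.vs n s } φ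
  | .exD n φ => ∃ d : CoDummy, CoSat M { ρ with vd := Function.update ρ.vd n d } φ
  | .allB n φ => ∀ b : Bool, CoSat M { ρ with vb := Function.update ρ.vb n b } φ
  | .allS n φ => ∀ s : CoBits, CoSat M { ρ with vs := Function.update ρ.vs n s } φ
  | .allD n φ => ∀ d : CoDummy, CoSat M { ρ with vd := Function.update ρ.vd n d } φ

/-- Validity in the theory of codatatypes. -/
def ValidCo (φ : Fm) : Prop := ∀ (M : CoModel) (ρ : CoValn), CoSat M ρ φ

/-- Satisfiability in the theory of codatatypes. -/
def SatCo (φ : Fm) : Prop := ∃ (M : CoModel) (ρ : CoValn), CoSat M ρ φ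

mutual
/-- A Gödel numbering of `bool` terms. -/
def encB : TB → ℕ
  | .var n => Nat.pair 0 n
  | .tt => Nat.pair 1 0
  | .ff => Nat.pair 2 0
  | .selH t => Nat.pair 3 (encD t)
/-- A Gödel numbering of `bitstring` terms. -/
def encS : TS → ℕ
  | .var n => Nat.pair 0 n
  | .eps => Nat.pair 1 0
  | .b0 t => Nat.pair 2 (encS t)
  | .b1 t => Nat.pair 3 (encS t)
  | .selT0 t => Nat.pair 4 (encS t)
  | .selT1 t => Nat.pair 5 (encS t)
  | .selB1 t => Nat.pair 6 (encD t)
  | .selB2 t => Nat.pair 7 (encD t)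
/-- A Gödel numbering of `dummy` terms. -/
def encD : TD → ℕ
  | .var n => Nat.pair 0 n
  | .fc a b => Nat.pair 1 (Nat.pair (encS a) (encS b))
  | .gc b => Nat.pair 2 (encB b)
end

/-- A Gödel numbering of formulae. -/
def encF : Fm → ℕ
  | .eqB a b => Nat.pair 0 (Nat.pair (encB a) (encB b))
  | .eqS a b => Nat.pair 1 (Nat.pair (encS a) (encS b))
  | .eqD a b => Nat.pair 2 (Nat.pair (encD a) (encD b))
  | .not φ => Nat.pair 3 (encF φ)
  | .and φ ψ => Nat.pair 4 (Nat.pair (encF φ) (encF ψ))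
  | .or φ ψ => Nat.pair 5 (Nat.pair (encF φ) (encF ψ))
  | .imp φ ψ => Nat.pair 6 (Nat.pair (encF φ) (encF ψ))
  | .exB n φ => Nat.pair 7 (Nat.pair n (encF φ))
  | .exS n φ => Nat.pair 8 (Nat.pair n (encF φ))
  | .exD n φ => Nat.pair 9 (Nat.pair n (encF φ))
  | .allB n φ => Nat.pair 10 (Nat.pair n (encF φ))
  | .allS n φ => Nat.pair 11 (Nat.pair n (encF φ))
  | .allD n φ => Nat.pair 12 (Nat.pair n (encF φ))

mutual
/-- The (sorted) free variables of a `bool` term (`0 = bool`, `1 = bitstring`,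
`2 = dummy`). -/
def fvTB : TB → Finset (Fin 3 × ℕ)
  | .var n => {(0, n)}
  | .tt => ∅
  | .ff => ∅
  | .selH t => fvTD t
/-- The free variables of a `bitstring` term. -/
def fvTS : TS → Finset (Fin 3 × ℕ)
  | .var n => {(1, n)}
  | .eps => ∅
  | .b0 t => fvTS t
  | .b1 t => fvTS t
  | .selT0 t => fvTS t
  | .selT1 t => fvTS t
  | .selB1 t => fvTD t
  | .selB2 t => fvTD t
/-- The free variables of a `dummy` term. -/
def fvTD : TD → Finset (Fin 3 × ℕ)
  | .var n => {(2, n)}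
  | .fc a b => fvTS a ∪ fvTS b
  | .gc b => fvTB b
end

/-- The free variables of a formula. -/
def fvF : Fm → Finset (Fin 3 × ℕ)
  | .eqB a b => fvTB a ∪ fvTB b
  | .eqS a b => fvTS a ∪ fvTS b
  | .eqD a b => fvTD a ∪ fvTD b
  | .not φ => fvF φ
  | .and φ ψ => fvF φ ∪ fvF ψ
  | .or φ ψ => fvF φ ∪ fvF ψ
  | .imp φ ψ => fvF φ ∪ fvF ψ
  | .exB n φ => fvF φ \ {(0, n)}
  | .exS n φ => fvF φ \ {(1, n)}
  | .exD n φ => fvF φ \ {(2, n)}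
  | .allB n φ => fvF φ \ {(0, n)}
  | .allS n φ => fvF φ \ {(1, n)}
  | .allD n φ => fvF φ \ {(2, n)}

/-- A formula is a sentence if it has no free variables. -/
def Fm.Closed (φ : Fm) : Prop := fvF φ = ∅

namespace Und

/-- An abstract bitstring-like structure: an "empty" element, two injective
constructors with disjoint ranges avoiding the empty element, and an arbitrary
binary relation. -/
structure GS (α : Type) where
  e : α
  c : Bool → α → α
  R : α → α → Prop
  hinj : ∀ {b x b' x'}, c b x = c b' x' → b = b' ∧ x = x'
  hne : ∀ b x, c b x ≠ e

/-- Terms of the fragment. -/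
inductive GTm : Type
  | var (n : ℕ)
  | eps
  | cb (b : Bool) (t : GTm)

def GTm.toTS : GTm → TS
  | .var n => .var n
  | .eps => .eps
  | .cb false t => .b0 t.toTS
  | .cb true t => .b1 t.toTS

def GTm.fv : GTm → Finset ℕ
  | .var n => {n}
  | .eps => ∅
  | .cb _ t => t.fv

/-- Formulae of the fragment. -/
inductive GFr : Type
  | rel (a b : GTm)
  | eq (a b : GTm)
  | fls
  | and (f g : GFr)
  | or (f g : GFr)
  | imp (f g : GFr)
  | ex (n : ℕ) (f : GFr)
  | all (n : ℕ) (f : GFr)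

def GFr.toFm : GFr → Fm
  | .rel a b => .eqB (.selH (.fc a.toTS b.toTS)) .tt
  | .eq a b => .eqS a.toTS b.toTS
  | .fls => .not (.eqS .eps .eps)
  | .and f g => .and f.toFm g.toFm
  | .or f g => .or f.toFm g.toFm
  | .imp f g => .imp f.toFm g.toFm
  | .ex n f => .exS n f.toFm
  | .all n f => .allS n f.toFm

def GFr.fv : GFr → Finset ℕ
  | .rel a b => a.fv ∪ b.fv
  | .eq a b => a.fv ∪ b.fv
  | .fls => ∅
  | .and f g => f.fv ∪ g.fv
  | .or f g => f.fv ∪ g.fv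
  | .imp f g => f.fv ∪ g.fv
  | .ex n f => f.fv \ {n}
  | .all n f => f.fv \ {n}

variable {α : Type}

def GS.ev (G : GS α) (ρ : ℕ → α) : GTm → α
  | .var n => ρ n
  | .eps => G.e
  | .cb b t => G.c b (G.ev ρ t)

def GS.sat (G : GS α) (ρ : ℕ → α) : GFr → Prop
  | .rel a b => G.R (G.ev ρ a) (G.ev ρ b)
  | .eq a b => G.ev ρ a = G.ev ρ b
  | .fls => False
  | .and f g => G.sat ρ f ∧ G.sat ρ g
  | .or f g => G.sat ρ f ∨ G.sat ρ g
  | .imp f g => G.sat ρ f → G.sat ρ g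
  | .ex n f => ∃ x : α, G.sat (Function.update ρ n x) f
  | .all n f => ∀ x : α, G.sat (Function.update ρ n x) f

theorem GS.ev_congr (G : GS α) {ρ ρ' : ℕ → α} :
    ∀ {t : GTm}, (∀ n ∈ t.fv, ρ n = ρ' n) → G.ev ρ t = G.ev ρ' t
  | .var n, h => h n (by simp [GTm.fv])
  | .eps, _ => rfl
  | .cb b t, h => by
      rw [GS.ev, GS.ev, G.ev_congr (t := t) (fun n hn => h n (by simpa [GTm.fv] using hn))]

theorem GS.ev_update (G : GS α) {ρ : ℕ → α} {m : ℕ} {x : α} {t : GTm}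
    (h : t.fv ⊆ Finset.range m) : G.ev (Function.update ρ m x) t = G.ev ρ t :=
  G.ev_congr fun n hn => Function.update_of_ne (by have := h hn; simp at this; omega) _ _

/-- Satisfaction only depends on the relation (given same `e`, `c`) up to iff. -/
theorem GS.sat_congrR {G G' : GS α} (he : G.e = G'.e) (hc : G.c = G'.c)
    (hR : ∀ x y, G.R x y ↔ G'.R x y) :
    ∀ (f : GFr) (ρ : ℕ → α), G.sat ρ f ↔ G'.sat ρ f := by
  have hev : ∀ ρ t, G.ev ρ t = G'.ev ρ t := by
    intro ρ t; induction t with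
    | var n => rfl
    | eps => exact he
    | cb b t ih => rw [GS.ev, GS.ev, hc, ih]
  intro f
  induction f with
  | rel a b => intro ρ; rw [GS.sat, GS.sat, hev, hev]; exact hR _ _
  | eq a b => intro ρ; rw [GS.sat, GS.sat, hev, hev]
  | fls => intro ρ; exact Iff.rfl
  | and f g ihf ihg => intro ρ; rw [GS.sat, GS.sat]; exact and_congr (ihf ρ) (ihg ρ)
  | or f g ihf ihg => intro ρ; rw [GS.sat, GS.sat]; exact or_congr (ihf ρ) (ihg ρ)
  | imp f g ihf ihg => intro ρ; rw [GS.sat, GS.sat]; exact imp_congr (ihf ρ) (ihg ρ)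
  | ex n f ih => intro ρ; rw [GS.sat, GS.sat]; exact exists_congr fun x => ih _
  | all n f ih => intro ρ; rw [GS.sat, GS.sat]; exact forall_congr' fun x => ih _

/-! ### Bridges to the concrete data and codata semantics -/

def _root_.Model.gs (M : Model) : GS Bits where
  e := []
  c := List.cons
  R := fun x y => M.sh (.inl (x, y)) = true
  hinj := fun h => ⟨(List.cons.injEq _ _ _ _ ▸ h : _ ∧ _).1, (List.cons.injEq _ _ _ _ ▸ h : _ ∧ _).2⟩
  hne := by simp

theorem CoBits.cons_inj {b b' : Bool} {t t' : CoBits}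
    (h : CoBits.cons b t = CoBits.cons b' t') : b = b' ∧ t = t' := by
  constructor
  · have h0 := congrArg (fun f : CoBits => f.1 0) h
    simpa [CoBits.cons] using h0
  · refine Subtype.ext (funext fun n => ?_)
    have h1 := congrArg (fun f : CoBits => f.1 (n + 1)) h
    simpa [CoBits.cons] using h1

theorem CoBits.cons_ne_nil (b : Bool) (t : CoBits) : CoBits.cons b t ≠ CoBits.nil := by
  intro h
  have h0 := congrArg (fun f : CoBits => f.1 0) h
  simp [CoBits.cons, CoBits.nil] at h0

def _root_.CoModel.gs (M : CoModel) : GS CoBits where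
  e := CoBits.nil
  c := CoBits.cons
  R := fun x y => M.sh (.inl (x, y)) = true
  hinj := CoBits.cons_inj
  hne := CoBits.cons_ne_nil

theorem evalS_toTS (M : Model) (ρ : Valn) : ∀ t : GTm, evalS M ρ t.toTS = M.gs.ev ρ.vs t
  | .var n => rfl
  | .eps => rfl
  | .cb false t => by rw [GTm.toTS, evalS, evalS_toTS M ρ t]; rfl
  | .cb true t => by rw [GTm.toTS, evalS, evalS_toTS M ρ t]; rfl

theorem coevalS_toTS (M : CoModel) (ρ : CoValn) : ∀ t : GTm, coevalS M ρ t.toTS = M.gs.ev ρ.vs t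
  | .var n => rfl
  | .eps => rfl
  | .cb false t => by rw [GTm.toTS, coevalS, coevalS_toTS M ρ t]; rfl
  | .cb true t => by rw [GTm.toTS, coevalS, coevalS_toTS M ρ t]; rfl

theorem sat_toFm (M : Model) : ∀ (f : GFr) (ρ : Valn), Sat M ρ f.toFm ↔ M.gs.sat ρ.vs f
  | .rel a b, ρ => by
      rw [GFr.toFm, Sat, evalB, evalB, evalD, evalS_toTS, evalS_toTS, GS.sat]
      exact Iff.rfl
  | .eq a b, ρ => by rw [GFr.toFm, Sat, evalS_toTS, evalS_toTS, GS.sat]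
  | .fls, ρ => by rw [GFr.toFm, Sat, GS.sat]; simp [Sat]
  | .and f g, ρ => by rw [GFr.toFm, Sat, GS.sat]; exact and_congr (sat_toFm M f ρ) (sat_toFm M g ρ)
  | .or f g, ρ => by rw [GFr.toFm, Sat, GS.sat]; exact or_congr (sat_toFm M f ρ) (sat_toFm M g ρ)
  | .imp f g, ρ => by rw [GFr.toFm, Sat, GS.sat]; exact imp_congr (sat_toFm M f ρ) (sat_toFm M g ρ)
  | .ex n f, ρ => by
      rw [GFr.toFm, Sat, GS.sat]
      exact exists_congr fun s => sat_toFm M f { ρ with vs := Function.update ρ.vs n s }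
  | .all n f, ρ => by
      rw [GFr.toFm, Sat, GS.sat]
      exact forall_congr' fun s => sat_toFm M f { ρ with vs := Function.update ρ.vs n s }

theorem cosat_toFm (M : CoModel) : ∀ (f : GFr) (ρ : CoValn), CoSat M ρ f.toFm ↔ M.gs.sat ρ.vs f
  | .rel a b, ρ => by
      rw [GFr.toFm, CoSat, coevalB, coevalB, coevalD, coevalS_toTS, coevalS_toTS, GS.sat]
      exact Iff.rfl
  | .eq a b, ρ => by rw [GFr.toFm, CoSat, coevalS_toTS, coevalS_toTS, GS.sat]
  | .fls, ρ => by rw [GFr.toFm, CoSat, GS.sat]; simp [CoSat]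
  | .and f g, ρ => by
      rw [GFr.toFm, CoSat, GS.sat]; exact and_congr (cosat_toFm M f ρ) (cosat_toFm M g ρ)
  | .or f g, ρ => by
      rw [GFr.toFm, CoSat, GS.sat]; exact or_congr (cosat_toFm M f ρ) (cosat_toFm M g ρ)
  | .imp f g, ρ => by
      rw [GFr.toFm, CoSat, GS.sat]; exact imp_congr (cosat_toFm M f ρ) (cosat_toFm M g ρ)
  | .ex n f, ρ => by
      rw [GFr.toFm, CoSat, GS.sat]
      exact exists_congr fun s => cosat_toFm M f { ρ with vs := Function.update ρ.vs n s }
  | .all n f, ρ => by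
      rw [GFr.toFm, CoSat, GS.sat]
      exact forall_congr' fun s => cosat_toFm M f { ρ with vs := Function.update ρ.vs n s }

theorem fvTS_toTS : ∀ t : GTm, fvTS t.toTS = t.fv.image fun n => ((1 : Fin 3), n)
  | .var n => by simp [GTm.toTS, fvTS, GTm.fv]
  | .eps => by simp [GTm.toTS, fvTS, GTm.fv]
  | .cb false t => by rw [GTm.toTS, fvTS, fvTS_toTS t]; rfl
  | .cb true t => by rw [GTm.toTS, fvTS, fvTS_toTS t]; rfl

theorem fvF_toFm : ∀ f : GFr, fvF f.toFm = f.fv.image fun n => ((1 : Fin 3), n)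
  | .rel a b => by
      simp [GFr.toFm, fvF, fvTB, fvTD, fvTS_toTS, GFr.fv, Finset.image_union]
  | .eq a b => by simp [GFr.toFm, fvF, fvTS_toTS, GFr.fv, Finset.image_union]
  | .fls => by simp [GFr.toFm, fvF, fvTS, GFr.fv]
  | .and f g => by simp [GFr.toFm, fvF, fvF_toFm f, fvF_toFm g, GFr.fv, Finset.image_union]
  | .or f g => by simp [GFr.toFm, fvF, fvF_toFm f, fvF_toFm g, GFr.fv, Finset.image_union]
  | .imp f g => by simp [GFr.toFm, fvF, fvF_toFm f, fvF_toFm g, GFr.fv, Finset.image_union]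
  | .ex n f => by
      rw [GFr.toFm, fvF, fvF_toFm f, GFr.fv,
        Finset.image_sdiff _ _ (fun a b h => by simpa using h)]
      simp
  | .all n f => by
      rw [GFr.toFm, fvF, fvF_toFm f, GFr.fv,
        Finset.image_sdiff _ _ (fun a b h => by simpa using h)]
      simp

/-! ### Building full models from a relation -/

noncomputable def mkModel (R : Bits → Bits → Prop) : Model where
  t0 := List.tail
  t1 := List.tail
  s1 := Sum.elim Prod.fst fun _ => []
  s2 := Sum.elim Prod.snd fun _ => []
  sh := Sum.elim (fun p => by classical exact decide (R p.1 p.2)) id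
  ht0 := fun t => rfl
  ht1 := fun t => rfl
  hs1 := fun a b => rfl
  hs2 := fun a b => rfl
  hsh := fun b => rfl

theorem mkModel_R (R : Bits → Bits → Prop) (x y : Bits) : (mkModel R).gs.R x y ↔ R x y := by
  simp [mkModel, Model.gs]

def cotl (t : CoBits) : CoBits := ⟨fun n => t.1 (n + 1), fun n h => t.2 (n + 1) h⟩

theorem cotl_cons (b : Bool) (t : CoBits) : cotl (CoBits.cons b t) = t :=
  Subtype.ext (funext fun n => rfl)

noncomputable def mkCoModel (R : CoBits → CoBits → Prop) : CoModel where
  t0 := cotl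
  t1 := cotl
  s1 := Sum.elim Prod.fst fun _ => CoBits.nil
  s2 := Sum.elim Prod.snd fun _ => CoBits.nil
  sh := Sum.elim (fun p => by classical exact decide (R p.1 p.2)) id
  ht0 := cotl_cons false
  ht1 := cotl_cons true
  hs1 := fun a b => rfl
  hs2 := fun a b => rfl
  hsh := fun b => rfl

theorem mkCoModel_R (R : CoBits → CoBits → Prop) (x y : CoBits) :
    (mkCoModel R).gs.R x y ↔ R x y := by
  simp [mkCoModel, CoModel.gs]

end Und
namespace Und

/-! ### An undecidable halting problem for a fixed `ToPartrec` code -/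

def dHalt (n : ℕ) : Prop := ((Denumerable.ofNat Nat.Partrec.Code n).eval n).Dom

theorem dHalt_partrec : Partrec fun n => (Denumerable.ofNat Nat.Partrec.Code n).eval n :=
  Nat.Partrec.Code.eval_part.comp (Computable.ofNat _) Computable.id

theorem dHalt_not_computable : ¬ComputablePred dHalt := by
  intro h
  obtain ⟨f, hf, hpf⟩ := ComputablePred.computable_iff.1 h
  have hg : Partrec fun n => cond (f n) (Part.none : Part ℕ) (Part.some 0) :=
    Partrec.cond hf Partrec.none (Partrec.some.comp (Computable.const 0))
  obtain ⟨c, hc⟩ := Nat.Partrec.Code.exists_code.1 (Partrec.nat_iff.1 hg)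
  set n₀ := Encodable.encode c with hn₀
  have hdiag : dHalt n₀ = (cond (f n₀) (Part.none : Part ℕ) (Part.some 0)).Dom := by
    rw [dHalt, hn₀, Denumerable.ofNat_encode, hc]
  have hpn := congrFun hpf n₀
  cases hfn : f n₀ with
  | true =>
      have h1 : dHalt n₀ := by rw [hpn, hfn]
      rw [hdiag, hfn] at h1
      simp at h1
  | false =>
      have h1 : dHalt n₀ := by rw [hdiag, hfn]; trivial
      rw [hpn, hfn] at h1
      simp at h1

theorem exists_U : ∃ u : Turing.ToPartrec.Code,
    ∀ n : ℕ, (u.eval [n]).Dom ↔ dHalt n := by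
  have h1 : Nat.Partrec' fun v : List.Vector ℕ 1 =>
      (Denumerable.ofNat Nat.Partrec.Code v.head).eval v.head :=
    Nat.Partrec'.part_iff₁.2 dHalt_partrec
  obtain ⟨c, hc⟩ := Turing.ToPartrec.Code.exists_code h1
  refine ⟨c, fun n => ?_⟩
  have h2 := hc ⟨[n], rfl⟩
  have h3 : (⟨[n], rfl⟩ : List.Vector ℕ 1).1 = [n] := rfl
  rw [h3] at h2
  rw [h2]
  exact Iff.rfl

noncomputable def U : Turing.ToPartrec.Code := exists_U.choose

theorem U_spec : ∀ n : ℕ, (U.eval [n]).Dom ↔ dHalt n := exists_U.choose_spec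

/-- The halting problem for the fixed code `U`. -/
def Halts (n : ℕ) : Prop := (Turing.ToPartrec.Code.eval U [n]).Dom

theorem halts_undec : ¬ComputablePred Halts := fun h =>
  dHalt_not_computable (h.of_eq fun n => U_spec n)

open Turing Turing.TM2 Turing.PartrecToTM2

theorem halts_iff_tm (n : ℕ) :
    Halts n ↔ (StateTransition.eval (TM2.step tr) (init U [n])).Dom := by
  rw [PartrecToTM2.tr_eval]
  exact Iff.rfl

end Und
namespace Und

open Turing Turing.TM2 Turing.PartrecToTM2

/-! ### Encoding TM2 configurations into the abstract structure -/

def gbit : Γ' → Bool × Bool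
  | .consₗ => (false, false)
  | .cons => (false, true)
  | .bit0 => (true, false)
  | .bit1 => (true, true)

theorem gbit_inj : ∀ {γ γ' : Γ'}, gbit γ = gbit γ' → γ = γ' := by decide

def consTm (γ : Γ') (t : GTm) : GTm := .cb (gbit γ).1 (.cb (gbit γ).2 t)

def litTm (L : List Γ') : GTm := L.foldr consTm .eps

def numTm : ℕ → GTm
  | 0 => .eps
  | i + 1 => .cb false (numTm i)

def slotTm (j : ℕ) (t : GTm) : GTm := .cb j.bodd (.cb (j / 2).bodd (.cb (j / 4).bodd t))

variable {α : Type}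

def GS.emb (G : GS α) (L : List Γ') : α :=
  L.foldr (fun γ x => G.c (gbit γ).1 (G.c (gbit γ).2 x)) G.e

def GS.num (G : GS α) : ℕ → α
  | 0 => G.e
  | i + 1 => G.c false (G.num i)

def GS.slot (G : GS α) (j : ℕ) (x : α) : α :=
  G.c j.bodd (G.c (j / 2).bodd (G.c (j / 4).bodd x))

theorem GS.num_inj (G : GS α) : ∀ {i j : ℕ}, G.num i = G.num j → i = j
  | 0, 0, _ => rfl
  | 0, j + 1, h => absurd h.symm (G.hne _ _)
  | i + 1, 0, h => absurd h (G.hne _ _)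
  | i + 1, j + 1, h => congrArg Nat.succ (G.num_inj (G.hinj h).2)

theorem GS.slot_inj (G : GS α) {j j' : ℕ} {x x' : α} (hj : j < 5) (hj' : j' < 5)
    (h : G.slot j x = G.slot j' x') : j = j' ∧ x = x' := by
  rw [GS.slot, GS.slot] at h
  obtain ⟨h1, h⟩ := G.hinj h
  obtain ⟨h2, h⟩ := G.hinj h
  obtain ⟨h3, h⟩ := G.hinj h
  refine ⟨?_, h⟩
  interval_cases j <;> interval_cases j' <;> first
    | rfl
    | (exfalso; revert h1 h2 h3; decide)

theorem GS.ev_consTm (G : GS α) (ρ : ℕ → α) (γ : Γ') (t : GTm) :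
    G.ev ρ (consTm γ t) = G.c (gbit γ).1 (G.c (gbit γ).2 (G.ev ρ t)) := rfl

theorem GS.ev_litTm (G : GS α) (ρ : ℕ → α) : ∀ L : List Γ', G.ev ρ (litTm L) = G.emb L
  | [] => rfl
  | γ :: L => by
      rw [GS.emb, List.foldr_cons, litTm, List.foldr_cons, ← GS.emb, ← litTm,
        ← G.ev_litTm ρ L]
      rfl

theorem GS.ev_numTm (G : GS α) (ρ : ℕ → α) : ∀ i : ℕ, G.ev ρ (numTm i) = G.num i
  | 0 => rfl
  | i + 1 => by rw [numTm, GS.ev, G.ev_numTm ρ i]; rfl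

theorem GS.ev_slotTm (G : GS α) (ρ : ℕ → α) (j : ℕ) (t : GTm) :
    G.ev ρ (slotTm j t) = G.slot j (G.ev ρ t) := rfl

theorem fv_consTm (γ : Γ') (t : GTm) : (consTm γ t).fv = t.fv := rfl

theorem fv_litTm : ∀ L : List Γ', (litTm L).fv = ∅
  | [] => rfl
  | γ :: L => by rw [litTm, List.foldr_cons, ← litTm, fv_consTm, fv_litTm L]

theorem fv_numTm : ∀ i : ℕ, (numTm i).fv = ∅
  | 0 => rfl
  | i + 1 => by rw [numTm, GTm.fv, fv_numTm i]

theorem fv_slotTm (j : ℕ) (t : GTm) : (slotTm j t).fv = t.fv := rfl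

theorem GS.emb_eq_e (G : GS α) : ∀ {L : List Γ'}, G.emb L = G.e ↔ L = []
  | [] => by simp [GS.emb]
  | γ :: L => by
      simp only [GS.emb, List.foldr_cons]
      exact ⟨fun h => absurd h (G.hne _ _), fun h => by simp at h⟩

/-! ### The fixed machine's finite support and index of configurations -/

noncomputable def MS : Finset Λ' := codeSupp U Cont'.halt

noncomputable def pairs : List (Λ' × Option Γ') :=
  MS.toList ×ˢ [none, some .consₗ, some .cons, some .bit0, some .bit1]

theorem pairs_mem {q : Λ'} (v : Option Γ') (hq : q ∈ MS) : (q, v) ∈ pairs := by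
  rw [pairs, List.mem_product]
  refine ⟨Finset.mem_toList.2 hq, ?_⟩
  rcases v with - | γ
  · simp
  · cases γ <;> simp

noncomputable def pidx (p : Λ' × Option Γ') : ℕ := @List.idxOf _ instBEqOfDecidableEq p pairs

theorem pidx_inj {p p' : Λ' × Option Γ'} (h : p ∈ pairs) (h' : p' ∈ pairs)
    (he : pidx p = pidx p') : p = p' := by
  rw [pidx, pidx] at he
  exact (@List.idxOf_inj _ instBEqOfDecidableEq _ _ _ _ h).1 he

noncomputable def finIdx (c : Cfg') : ℕ := pidx (c.l.iget, c.var)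

/-- Membership of an (encoded) configuration in the relation-coded set. -/
def GS.gp (G : GS α) (i : ℕ) (s : K' → α) : Prop :=
  ∃ t, G.R (G.slot 0 t) (G.num i) ∧ G.R (G.slot 1 t) (s K'.main) ∧
    G.R (G.slot 2 t) (s K'.rev) ∧ G.R (G.slot 3 t) (s K'.aux) ∧ G.R (G.slot 4 t) (s K'.stack)

noncomputable def GS.gpc (G : GS α) (c : Cfg') : Prop :=
  G.gp (finIdx c) fun k => G.emb (c.stk k)

noncomputable def GS.qsem (G : GS α) (c : Cfg') : Prop := c.l.isSome ∧ G.gpc c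

/-! ### Formulas -/

def inPfm (i : ℕ) (S : K' → GTm) (m : ℕ) : GFr :=
  .ex m <| .and (.rel (slotTm 0 (.var m)) (numTm i)) <|
    .and (.rel (slotTm 1 (.var m)) (S .main)) <| .and (.rel (slotTm 2 (.var m)) (S .rev)) <|
      .and (.rel (slotTm 3 (.var m)) (S .aux)) (.rel (slotTm 4 (.var m)) (S .stack))

theorem GS.sat_inPfm (G : GS α) {S : K' → GTm} {m i : ℕ} {ρ : ℕ → α}
    (hb : ∀ k, (S k).fv ⊆ Finset.range m) :
    G.sat ρ (inPfm i S m) ↔ G.gp i fun k => G.ev ρ (S k) := by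
  rw [inPfm, GS.sat]
  refine exists_congr fun x => ?_
  have hv : G.ev (Function.update ρ m x) (.var m) = x := Function.update_self _ _ _
  rw [GS.sat, GS.sat, GS.sat, GS.sat, GS.sat, GS.sat, GS.sat, GS.sat, GS.sat,
    G.ev_slotTm, G.ev_slotTm, G.ev_slotTm, G.ev_slotTm, G.ev_slotTm, G.ev_numTm, hv,
    G.ev_update (hb K'.main), G.ev_update (hb K'.rev), G.ev_update (hb K'.aux),
    G.ev_update (hb K'.stack)]

def gOr (F : Γ' → GFr) : GFr := .or (F .consₗ) (.or (F .cons) (.or (F .bit0) (F .bit1)))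

theorem GS.sat_gOr (G : GS α) (ρ : ℕ → α) (F : Γ' → GFr) :
    G.sat ρ (gOr F) ↔ ∃ γ, G.sat ρ (F γ) := by
  rw [gOr, GS.sat, GS.sat, GS.sat]
  constructor
  · rintro (h | h | h | h) <;> exact ⟨_, h⟩
  · rintro ⟨γ, h⟩; cases γ <;> tauto

theorem fv_gOr (F : Γ' → GFr) :
    (gOr F).fv = (F .consₗ).fv ∪ (F .cons).fv ∪ (F .bit0).fv ∪ (F .bit1).fv := by
  rw [gOr, GFr.fv, GFr.fv, GFr.fv]
  rw [Finset.union_assoc, Finset.union_assoc]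

/-- Compiling a TM2 statement into a formula expressing that the configuration
resulting from executing the statement is in the relation-coded set (and is not
a halting configuration). -/
noncomputable def compile : Option Γ' → (K' → GTm) → ℕ → Stmt' → GFr
  | v, S, m, .push k f q => compile v (Function.update S k (consTm (f v) (S k))) m q
  | v, S, m, .peek k f q =>
      .or (.and (.eq (S k) .eps) (compile (f v none) S m q))
        (gOr fun γ => .ex m (.and (.eq (S k) (consTm γ (.var m)))
          (compile (f v (some γ)) S (m + 1) q)))
  | v, S, m, .pop k f q =>
      .or (.and (.eq (S k) .eps) (compile (f v none) (Function.update S k .eps) m q))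
        (gOr fun γ => .ex m (.and (.eq (S k) (consTm γ (.var m)))
          (compile (f v (some γ)) (Function.update S k (.var m)) (m + 1) q)))
  | v, S, m, .load a q => compile (a v) S m q
  | v, S, m, .branch f q₁ q₂ => cond (f v) (compile v S m q₁) (compile v S m q₂)
  | v, S, m, .goto f => inPfm (pidx (f v, v)) S m
  | _, _, _, .halt => .fls

end Und
namespace Und

open Turing Turing.TM2 Turing.PartrecToTM2

variable {α : Type}

def fvS (S : K' → GTm) : Finset ℕ :=
  (S .main).fv ∪ (S .rev).fv ∪ (S .aux).fv ∪ (S .stack).fv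

theorem fvS_le (S : K' → GTm) (k : K') : (S k).fv ⊆ fvS S := by
  intro x hx
  rw [fvS, Finset.mem_union, Finset.mem_union, Finset.mem_union]
  cases k
  · exact Or.inl (Or.inl (Or.inl hx))
  · exact Or.inl (Or.inl (Or.inr hx))
  · exact Or.inl (Or.inr hx)
  · exact Or.inr hx

theorem fvS_update (S : K' → GTm) (k : K') (t : GTm) :
    fvS (Function.update S k t) ⊆ fvS S ∪ t.fv := by
  have h : ∀ k', (Function.update S k t k').fv ⊆ fvS S ∪ t.fv := by
    intro k'
    rw [Function.update_apply]
    split_ifs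
    · exact Finset.subset_union_right
    · exact (fvS_le S k').trans Finset.subset_union_left
  intro x hx
  rw [fvS, Finset.mem_union, Finset.mem_union, Finset.mem_union] at hx
  rcases hx with ((h1 | h1) | h1) | h1
  exacts [h _ h1, h _ h1, h _ h1, h _ h1]

theorem compile_fv : ∀ (q : Stmt') (v : Option Γ') (S : K' → GTm) (m : ℕ),
    (compile v S m q).fv ⊆ fvS S := by
  intro q
  induction q with
  | push k f q ih =>
      intro v S m
      rw [compile]
      refine (ih _ _ _).trans ((fvS_update _ _ _).trans ?_)
      rw [fv_consTm]
      exact Finset.union_subset Finset.Subset.rfl (fvS_le S k)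
  | peek k f q ih =>
      intro v S m
      rw [compile, GFr.fv, GFr.fv, fv_gOr]
      have hγ : ∀ γ : Γ',
          (GFr.ex m (.and (.eq (S k) (consTm γ (.var m)))
            (compile (f v (some γ)) S (m + 1) q))).fv ⊆ fvS S := by
        intro γ
        rw [GFr.fv, GFr.fv, GFr.fv, fv_consTm, GTm.fv]
        intro x hx
        rw [Finset.mem_sdiff, Finset.mem_singleton] at hx
        obtain ⟨hx, hne⟩ := hx
        rw [Finset.mem_union, Finset.mem_union] at hx
        rcases hx with (h1 | h1) | h1
        · exact fvS_le S k h1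
        · exact absurd (Finset.mem_singleton.1 h1) hne
        · exact ih _ _ _ h1
      refine Finset.union_subset (Finset.union_subset ?_ (ih _ _ _))
        (Finset.union_subset (Finset.union_subset (Finset.union_subset (hγ _) (hγ _)) (hγ _)) (hγ _))
      rw [GFr.fv, GTm.fv]
      simpa using fvS_le S k
  | pop k f q ih =>
      intro v S m
      rw [compile, GFr.fv, GFr.fv, fv_gOr]
      have hγ : ∀ γ : Γ',
          (GFr.ex m (.and (.eq (S k) (consTm γ (.var m)))
            (compile (f v (some γ)) (Function.update S k (.var m)) (m + 1) q))).fv ⊆ fvS S := by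
        intro γ
        rw [GFr.fv, GFr.fv, GFr.fv, fv_consTm, GTm.fv]
        intro x hx
        rw [Finset.mem_sdiff, Finset.mem_singleton] at hx
        obtain ⟨hx, hne⟩ := hx
        rw [Finset.mem_union, Finset.mem_union] at hx
        rcases hx with (h1 | h1) | h1
        · exact fvS_le S k h1
        · exact absurd (Finset.mem_singleton.1 h1) hne
        · have h2 := ((ih (f v (some γ)) (Function.update S k (.var m)) (m + 1)).trans
            (fvS_update S k (.var m))) h1
          rw [Finset.mem_union] at h2
          rcases h2 with h2 | h2
          · exact h2
          · rw [GTm.fv, Finset.mem_singleton] at h2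
            exact absurd h2 hne
      refine Finset.union_subset (Finset.union_subset ?_ ?_)
        (Finset.union_subset (Finset.union_subset (Finset.union_subset (hγ _) (hγ _)) (hγ _)) (hγ _))
      · rw [GFr.fv, GTm.fv]
        simpa using fvS_le S k
      · refine (ih _ _ _).trans ((fvS_update _ _ _).trans ?_)
        rw [GTm.fv]
        simpa using Finset.Subset.rfl
  | load a q ih =>
      intro v S m
      rw [compile]
      exact ih _ _ _
  | branch f q₁ q₂ ih₁ ih₂ =>
      intro v S m
      rw [compile]
      cases f v
      · exact ih₂ _ _ _
      · exact ih₁ _ _ _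
  | goto f =>
      intro v S m
      rw [compile, inPfm]
      simp only [GFr.fv, fv_slotTm, fv_numTm, GTm.fv]
      intro x hx
      rw [Finset.mem_sdiff, Finset.mem_singleton] at hx
      obtain ⟨hx, hne⟩ := hx
      simp only [Finset.mem_union, Finset.mem_singleton, Finset.notMem_empty, or_false,
        false_or] at hx
      have h0 : x ∈ (S K'.main).fv → x ∈ fvS S := fun h => fvS_le S K'.main h
      have h1 : x ∈ (S K'.rev).fv → x ∈ fvS S := fun h => fvS_le S K'.rev h
      have h2 : x ∈ (S K'.aux).fv → x ∈ fvS S := fun h => fvS_le S K'.aux h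
      have h3 : x ∈ (S K'.stack).fv → x ∈ fvS S := fun h => fvS_le S K'.stack h
      tauto
  | halt =>
      intro v S m
      rw [compile, GFr.fv]
      exact Finset.empty_subset _

theorem compile_ok (G : GS α) :
    ∀ (q : Stmt') (v : Option Γ') (S : K' → GTm) (m : ℕ) (ρ : ℕ → α) (stk : K' → List Γ'),
      (∀ k, G.ev ρ (S k) = G.emb (stk k)) → (∀ k, (S k).fv ⊆ Finset.range m) →
      (G.sat ρ (compile v S m q) ↔ G.qsem (TM2.stepAux q v stk)) := by
  intro q
  induction q with
  | push k f q ih =>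
      intro v S m ρ stk hS hb
      rw [compile]
      simp only [TM2.stepAux]
      refine ih _ _ _ _ (Function.update stk k (f v :: stk k)) ?_ ?_
      · intro k'
        rw [Function.update_apply, Function.update_apply]
        split_ifs with h
        · rw [G.ev_consTm, hS k]; rfl
        · exact hS k'
      · intro k'
        rw [Function.update_apply]
        split_ifs with h
        · rw [fv_consTm]; exact hb k
        · exact hb k'
  | peek k f q ih =>
      intro v S m ρ stk hS hb
      rw [compile]
      simp only [TM2.stepAux]
      rcases hstk : stk k with - | ⟨γ', r⟩
      · -- empty stack
        rw [GS.sat, G.sat_gOr]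
        have hright : ¬ ∃ γ, G.sat ρ (GFr.ex m (.and (.eq (S k) (consTm γ (.var m)))
            (compile (f v (some γ)) S (m + 1) q))) := by
          rintro ⟨γ, hγ⟩
          rw [GS.sat] at hγ
          obtain ⟨x, hγ⟩ := hγ
          rw [GS.sat, GS.sat] at hγ
          obtain ⟨h1, -⟩ := hγ
          rw [G.ev_update (hb k), hS k, hstk, G.ev_consTm] at h1
          exact G.hne _ _ h1.symm
        rw [GS.sat, GS.sat]
        have h1 : G.ev ρ (S k) = G.ev ρ .eps := by rw [hS k, hstk]; rfl
        rw [ih _ _ _ _ stk hS hb]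
        exact ⟨fun h => h.elim And.right fun h => absurd h hright, fun h => Or.inl ⟨h1, h⟩⟩
      · -- nonempty stack
        rw [GS.sat, G.sat_gOr]
        simp only [List.head?_cons]
        have hS' : ∀ k', G.ev (Function.update ρ m (G.emb r)) (S k') = G.emb (stk k') :=
          fun k' => (G.ev_update (hb k')).trans (hS k')
        have hb' : ∀ k', (S k').fv ⊆ Finset.range (m + 1) :=
          fun k' => (hb k').trans (Finset.range_subset_range.2 (Nat.le_succ m))
        constructor
        · rintro (⟨h1, -⟩ | ⟨γ, hγ⟩)
          · exfalso
            rw [GS.sat, hS k, hstk] at h1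
            exact G.hne _ _ (h1 : _)
          · rw [GS.sat] at hγ
            obtain ⟨x, hγ⟩ := hγ
            rw [GS.sat, GS.sat] at hγ
            obtain ⟨h1, h2⟩ := hγ
            have hx : G.ev (Function.update ρ m x) (.var m) = x := Function.update_self _ _ _
            rw [G.ev_update (hb k), hS k, hstk, G.ev_consTm, hx] at h1
            have hemb : G.emb (γ' :: r) = G.c (gbit γ').1 (G.c (gbit γ').2 (G.emb r)) := rfl
            rw [hemb] at h1
            obtain ⟨e1, hh⟩ := G.hinj h1
            obtain ⟨e2, hh2⟩ := G.hinj hh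
            have hγγ : γ' = γ := gbit_inj (Prod.ext e1 e2)
            subst hh2
            subst hγγ
            exact (ih _ _ _ _ stk hS' hb').1 h2
        · intro hq
          right
          refine ⟨γ', ?_⟩
          rw [GS.sat]
          refine ⟨G.emb r, ?_⟩
          rw [GS.sat, GS.sat]
          have hx : G.ev (Function.update ρ m (G.emb r)) (.var m) = G.emb r :=
            Function.update_self _ _ _
          refine ⟨?_, (ih _ _ _ _ stk hS' hb').2 hq⟩
          rw [G.ev_update (hb k), hS k, hstk, G.ev_consTm, hx]
          rfl
  | pop k f q ih =>
      intro v S m ρ stk hS hb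
      rw [compile]
      simp only [TM2.stepAux]
      rcases hstk : stk k with - | ⟨γ', r⟩
      · -- empty stack
        rw [GS.sat, G.sat_gOr]
        have hright : ¬ ∃ γ, G.sat ρ (GFr.ex m (.and (.eq (S k) (consTm γ (.var m)))
            (compile (f v (some γ)) (Function.update S k (.var m)) (m + 1) q))) := by
          rintro ⟨γ, hγ⟩
          rw [GS.sat] at hγ
          obtain ⟨x, hγ⟩ := hγ
          rw [GS.sat, GS.sat] at hγ
          obtain ⟨h1, -⟩ := hγ
          rw [G.ev_update (hb k), hS k, hstk, G.ev_consTm] at h1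
          exact G.hne _ _ h1.symm
        rw [GS.sat, GS.sat]
        have h1 : G.ev ρ (S k) = G.ev ρ .eps := by rw [hS k, hstk]; rfl
        have hSu : ∀ k', G.ev ρ (Function.update S k .eps k') =
            G.emb (Function.update stk k [].tail k') := by
          intro k'
          rw [Function.update_apply, Function.update_apply]
          split_ifs with h
          · rfl
          · exact hS k'
        have hbu : ∀ k', (Function.update S k .eps k').fv ⊆ Finset.range m := by
          intro k'
          rw [Function.update_apply]
          split_ifs with h
          · exact Finset.empty_subset _
          · exact hb k'
        rw [ih _ _ _ _ (Function.update stk k [].tail) hSu hbu]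
        exact ⟨fun h => h.elim And.right fun h => absurd h hright, fun h => Or.inl ⟨h1, h⟩⟩
      · -- nonempty stack
        rw [GS.sat, G.sat_gOr]
        simp only [List.head?_cons, List.tail_cons]
        constructor
        · rintro (⟨h1, -⟩ | ⟨γ, hγ⟩)
          · exfalso
            rw [GS.sat, hS k, hstk] at h1
            exact G.hne _ _ (h1 : _)
          · rw [GS.sat] at hγ
            obtain ⟨x, hγ⟩ := hγ
            rw [GS.sat, GS.sat] at hγ
            obtain ⟨h1, h2⟩ := hγ
            have hx : G.ev (Function.update ρ m x) (.var m) = x := Function.update_self _ _ _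
            rw [G.ev_update (hb k), hS k, hstk, G.ev_consTm, hx] at h1
            have hemb : G.emb (γ' :: r) = G.c (gbit γ').1 (G.c (gbit γ').2 (G.emb r)) := rfl
            rw [hemb] at h1
            obtain ⟨e1, hh⟩ := G.hinj h1
            obtain ⟨e2, hh2⟩ := G.hinj hh
            have hγγ : γ' = γ := gbit_inj (Prod.ext e1 e2)
            subst hh2
            subst hγγ
            refine (ih _ _ _ _ (Function.update stk k r) ?_ ?_).1 h2
            · intro k'
              rw [Function.update_apply, Function.update_apply]
              split_ifs with h
              · exact Function.update_self _ _ _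
              · exact (G.ev_update (hb k')).trans (hS k')
            · intro k'
              rw [Function.update_apply]
              split_ifs with h
              · rw [GTm.fv]
                intro y hy
                rw [Finset.mem_singleton] at hy
                rw [hy]
                exact Finset.mem_range.2 (Nat.lt_succ_self m)
              · exact (hb k').trans (Finset.range_subset_range.2 (Nat.le_succ m))
        · intro hq
          right
          refine ⟨γ', ?_⟩
          rw [GS.sat]
          refine ⟨G.emb r, ?_⟩
          rw [GS.sat, GS.sat]
          have hx : G.ev (Function.update ρ m (G.emb r)) (.var m) = G.emb r :=
            Function.update_self _ _ _
          constructor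
          · rw [G.ev_update (hb k), hS k, hstk, G.ev_consTm, hx]
            rfl
          · refine (ih _ _ _ _ (Function.update stk k r) ?_ ?_).2 hq
            · intro k'
              rw [Function.update_apply, Function.update_apply]
              split_ifs with h
              · exact hx
              · exact (G.ev_update (hb k')).trans (hS k')
            · intro k'
              rw [Function.update_apply]
              split_ifs with h
              · rw [GTm.fv]
                intro y hy
                rw [Finset.mem_singleton] at hy
                rw [hy]
                exact Finset.mem_range.2 (Nat.lt_succ_self m)
              · exact (hb k').trans (Finset.range_subset_range.2 (Nat.le_succ m))
  | load a q ih =>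
      intro v S m ρ stk hS hb
      rw [compile]
      simp only [TM2.stepAux]
      exact ih _ _ _ _ _ hS hb
  | branch f q₁ q₂ ih₁ ih₂ =>
      intro v S m ρ stk hS hb
      rw [compile]
      simp only [TM2.stepAux]
      cases f v
      · exact ih₂ _ _ _ _ _ hS hb
      · exact ih₁ _ _ _ _ _ hS hb
  | goto f =>
      intro v S m ρ stk hS hb
      rw [compile]
      simp only [TM2.stepAux]
      rw [G.sat_inPfm hb]
      have hfs : (fun k => G.ev ρ (S k)) = fun k => G.emb (stk k) := funext hS
      rw [hfs]
      simp [GS.qsem, GS.gpc, finIdx]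
  | halt =>
      intro v S m ρ stk hS hb
      rw [compile]
      simp only [TM2.stepAux]
      simp [GS.sat, GS.qsem]

end Und
namespace Und

open Turing Turing.TM2 Turing.PartrecToTM2

variable {α : Type}

def varS : K' → GTm
  | .main => .var 0
  | .rev => .var 1
  | .aux => .var 2
  | .stack => .var 3

def initS : K' → GTm
  | .main => .var 5
  | _ => .eps

noncomputable def idx0 : ℕ := pidx (trNormal U Cont'.halt, none)

noncomputable def ruleFm (p : Λ' × Option Γ') : GFr :=
  .imp (inPfm (pidx p) varS 4) (compile p.2 varS 5 (tr p.1))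

noncomputable def axFm : GFr :=
  .all 0 <| .all 1 <| .all 2 <| .all 3 <| (pairs.map ruleFm).foldr GFr.and (.eq .eps .eps)

noncomputable def phiFr (n : ℕ) : GFr :=
  .and (.ex 5 (.and (.eq (.var 5) (litTm (trList [n]))) (inPfm idx0 initS 6))) axFm

theorem hbvar {m : ℕ} (hm : 4 ≤ m) : ∀ k, (varS k).fv ⊆ Finset.range m := by
  intro k
  cases k <;> · rw [varS, GTm.fv]
                intro x hx
                rw [Finset.mem_singleton] at hx
                rw [hx, Finset.mem_range]
                omega

theorem hbinit : ∀ k, (initS k).fv ⊆ Finset.range 6 := by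
  intro k
  cases k <;> · first
        | (rw [show initS K'.main = .var 5 from rfl, GTm.fv]
           intro x hx
           rw [Finset.mem_singleton] at hx
           rw [hx, Finset.mem_range]
           omega)
        | exact Finset.empty_subset _

theorem sat_foldr_and (G : GS α) (ρ : ℕ → α) (base : GFr) :
    ∀ l : List GFr, G.sat ρ (l.foldr GFr.and base) ↔ G.sat ρ base ∧ ∀ f ∈ l, G.sat ρ f
  | [] => by simp
  | f :: l => by
      rw [List.foldr_cons, GS.sat, sat_foldr_and G ρ base l]
      simp only [List.mem_cons]
      constructor
      · rintro ⟨h1, h2, h3⟩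
        exact ⟨h2, fun g hg => hg.elim (fun h => h ▸ h1) (h3 g)⟩
      · rintro ⟨h1, h2⟩
        exact ⟨h2 f (Or.inl rfl), h1, fun g hg => h2 g (Or.inr hg)⟩

theorem fv_foldr_and (A : Finset ℕ) (base : GFr) (hbase : base.fv ⊆ A) :
    ∀ l : List GFr, (∀ f ∈ l, f.fv ⊆ A) → (l.foldr GFr.and base).fv ⊆ A
  | [] , _ => hbase
  | f :: l, h => by
      rw [List.foldr_cons, GFr.fv]
      exact Finset.union_subset (h f (List.mem_cons_self))
        (fv_foldr_and A base hbase l fun g hg => h g (List.mem_cons_of_mem _ hg))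

/-! ### The run of the machine -/

noncomputable def runs (n : ℕ) : ℕ → Option Cfg'
  | 0 => some (PartrecToTM2.init U [n])
  | i + 1 => (runs n i).bind (TM2.step tr)

theorem runs_reaches {n : ℕ} : ∀ {i : ℕ} {c : Cfg'}, runs n i = some c →
    StateTransition.Reaches (TM2.step tr) (PartrecToTM2.init U [n]) c := by
  intro i
  induction i with
  | zero => intro c h; rw [runs] at h; cases h; exact Relation.ReflTransGen.refl
  | succ i ih =>
      intro c h
      rw [runs] at h
      obtain ⟨c0, h0, hstep⟩ := Option.bind_eq_some_iff.1 h
      exact Relation.ReflTransGen.tail (ih h0) hstep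

theorem init_mem : trNormal U Cont'.halt ∈ MS :=
  codeSupp_self _ _ (trStmts₁_self _)

theorem runs_supp {n : ℕ} : ∀ {i : ℕ} {c : Cfg'}, runs n i = some c →
    c.l ∈ Finset.insertNone MS := by
  intro i
  induction i with
  | zero =>
      intro c h; rw [runs] at h; cases h
      exact Finset.some_mem_insertNone.2 init_mem
  | succ i ih =>
      intro c h
      rw [runs] at h
      obtain ⟨c0, h0, hstep⟩ := Option.bind_eq_some_iff.1 h
      exact @TM2.step_supports _ _ _ _ ⟨trNormal U Cont'.halt⟩ _ tr _
        (tr_supports U Cont'.halt) _ _ hstep (ih h0)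

theorem runs_not_halt {n : ℕ} (hn : ¬ Halts n) {i : ℕ} {c : Cfg'}
    (h : runs n i = some c) : c.l ≠ none := by
  intro hl
  apply hn
  rw [halts_iff_tm]
  refine Part.dom_iff_mem.2 ⟨c, StateTransition.mem_eval.2 ⟨runs_reaches h, ?_⟩⟩
  rcases c with ⟨l, v, stk⟩
  cases hl
  rfl

theorem runs_step {n i : ℕ} {q : Λ'} {cv : Option Γ'} {cstk : K' → List Γ'}
    (h : runs n i = some ⟨some q, cv, cstk⟩) :
    runs n (i + 1) = some (TM2.stepAux (tr q) cv cstk) := by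
  rw [runs, h]
  rfl

/-! ### Soundness: a non-halting run gives a model -/

noncomputable def cmp (G : GS α) (c : Cfg') : ℕ → α
  | 0 => G.num (finIdx c)
  | 1 => G.emb (c.stk .main)
  | 2 => G.emb (c.stk .rev)
  | 3 => G.emb (c.stk .aux)
  | _ => G.emb (c.stk .stack)

noncomputable def soundR (G : GS α) (n : ℕ) : α → α → Prop := fun x y =>
  ∃ i c j, j < 5 ∧ runs n i = some c ∧ x = G.slot j (G.num i) ∧ y = cmp G c j

theorem soundR_ext (G : GS α) {n : ℕ} (hR : ∀ x y, G.R x y ↔ soundR G n x y)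
    {t : α} {i0 : ℕ} {s : K' → α}
    (h0 : G.R (G.slot 0 t) (G.num i0)) (h1 : G.R (G.slot 1 t) (s K'.main))
    (h2 : G.R (G.slot 2 t) (s K'.rev)) (h3 : G.R (G.slot 3 t) (s K'.aux))
    (h4 : G.R (G.slot 4 t) (s K'.stack)) :
    ∃ i c, runs n i = some c ∧ i0 = finIdx c ∧ ∀ k, s k = G.emb (c.stk k) := by
  obtain ⟨i, c, j, hj, hrun, hx, hy⟩ := (hR _ _).1 h0
  obtain ⟨hj0, ht⟩ := G.slot_inj (by omega) hj hx
  subst ht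
  rw [← hj0] at hy
  rw [cmp] at hy
  have hcomp : ∀ (jj : ℕ) (y : α), jj < 5 → G.R (G.slot jj (G.num i)) y → y = cmp G c jj := by
    intro jj y hjj hy'
    obtain ⟨i', c', j', hj', hrun', hx', hy''⟩ := (hR _ _).1 hy'
    obtain ⟨hjeq, hnum⟩ := G.slot_inj hjj hj' hx'
    have hieq : i = i' := G.num_inj hnum
    subst hieq
    rw [hrun] at hrun'
    cases hrun'
    rw [hjeq]
    exact hy''
  refine ⟨i, c, hrun, G.num_inj hy, fun k => ?_⟩
  cases k
  · exact hcomp 1 _ (by omega) h1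
  · exact hcomp 2 _ (by omega) h2
  · exact hcomp 3 _ (by omega) h3
  · exact hcomp 4 _ (by omega) h4

theorem sound (G : GS α) (n : ℕ) (hn : ¬ Halts n)
    (hR : ∀ x y, G.R x y ↔ soundR G n x y) (ρ : ℕ → α) : G.sat ρ (phiFr n) := by
  have hfact : ∀ i c (j : ℕ), runs n i = some c → j < 5 →
      G.R (G.slot j (G.num i)) (cmp G c j) :=
    fun i c j h hj => (hR _ _).2 ⟨i, c, j, hj, h, rfl, rfl⟩
  have hgpc : ∀ i c, runs n i = some c → G.gpc c := by
    intro i c h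
    exact ⟨G.num i, hfact i c 0 h (by omega), hfact i c 1 h (by omega),
      hfact i c 2 h (by omega), hfact i c 3 h (by omega), hfact i c 4 h (by omega)⟩
  rw [phiFr, GS.sat]
  constructor
  · -- initial configuration
    rw [GS.sat]
    refine ⟨G.emb (trList [n]), ?_⟩
    rw [GS.sat, GS.sat]
    constructor
    · rw [G.ev_litTm]
      exact Function.update_self _ _ _
    · rw [G.sat_inPfm hbinit]
      have hfun : (fun k => G.ev (Function.update ρ 5 (G.emb (trList [n]))) (initS k)) =
          fun k => G.emb ((PartrecToTM2.init U [n]).stk k) := by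
        funext k
        cases k
        · exact Function.update_self _ _ _
        · rfl
        · rfl
        · rfl
      rw [hfun]
      exact hgpc 0 _ rfl
  · -- the closure axiom
    rw [axFm, GS.sat]
    intro x0
    rw [GS.sat]
    intro x1
    rw [GS.sat]
    intro x2
    rw [GS.sat]
    intro x3
    rw [sat_foldr_and]
    refine ⟨rfl, ?_⟩
    intro fr hfr
    rw [List.mem_map] at hfr
    obtain ⟨p, hp, rfl⟩ := hfr
    rw [ruleFm, GS.sat]
    intro hgp
    rw [G.sat_inPfm (hbvar (by omega))] at hgp
    obtain ⟨t, f0, f1, f2, f3, f4⟩ := hgp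
    obtain ⟨i, c, hrun, hidx, hcomp⟩ := soundR_ext G hR
      (s := fun k => G.ev (Function.update (Function.update (Function.update
        (Function.update ρ 0 x0) 1 x1) 2 x2) 3 x3) (varS k)) f0 f1 f2 f3 f4
    rcases c with ⟨l, cv, cstk⟩
    rcases l with - | q
    · exact absurd rfl (runs_not_halt hn hrun)
    have hqS : q ∈ MS := Finset.some_mem_insertNone.1 (runs_supp hrun)
    have hpp : p = (q, cv) := pidx_inj hp (pairs_mem cv hqS) hidx
    subst hpp
    rw [compile_ok G (tr q) cv varS 5 _ cstk hcomp (hbvar (by omega))]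
    have hrun' : runs n (i + 1) = some (TM2.stepAux (tr q) cv cstk) := runs_step hrun
    refine ⟨?_, hgpc _ _ hrun'⟩
    exact Option.isSome_iff_ne_none.2 (runs_not_halt hn hrun')

theorem ev_varS (G : GS α) (ρ : ℕ → α) (s : K' → α) (k : K') :
    G.ev (Function.update (Function.update (Function.update (Function.update ρ 0
      (s .main)) 1 (s .rev)) 2 (s .aux)) 3 (s .stack)) (varS k) = s k := by
  cases k <;> simp [varS, GS.ev, Function.update]

theorem complete (G : GS α) (n : ℕ) (ρ : ℕ → α) (h : G.sat ρ (phiFr n)) : ¬ Halts n := by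
  intro hh
  obtain ⟨b, hb⟩ := Part.dom_iff_mem.1 ((halts_iff_tm n).1 hh)
  obtain ⟨hreach, hstop⟩ := StateTransition.mem_eval.1 hb
  rw [phiFr, GS.sat] at h
  obtain ⟨hinit, hax⟩ := h
  have hI0 : G.gpc (PartrecToTM2.init U [n]) := by
    rw [GS.sat] at hinit
    obtain ⟨a, hinit⟩ := hinit
    rw [GS.sat, GS.sat] at hinit
    obtain ⟨ha, hin⟩ := hinit
    rw [G.ev_litTm] at ha
    rw [G.sat_inPfm hbinit] at hin
    have hfun : (fun k => G.ev (Function.update ρ 5 a) (initS k)) =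
        fun k => G.emb ((PartrecToTM2.init U [n]).stk k) := by
      funext k
      cases k
      · exact ha
      · rfl
      · rfl
      · rfl
    rw [hfun] at hin
    exact hin
  have hax' : ∀ (s : K' → α) (p : Λ' × Option Γ'), p ∈ pairs →
      G.gp (pidx p) s →
      G.sat (Function.update (Function.update (Function.update (Function.update ρ 0
        (s .main)) 1 (s .rev)) 2 (s .aux)) 3 (s .stack)) (compile p.2 varS 5 (tr p.1)) := by
    intro s p hp hgp
    rw [axFm, GS.sat] at hax
    have h0 := hax (s .main)
    rw [GS.sat] at h0
    have h1 := h0 (s .rev)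
    rw [GS.sat] at h1
    have h2 := h1 (s .aux)
    rw [GS.sat] at h2
    have h3 := h2 (s .stack)
    rw [sat_foldr_and] at h3
    have h4 := h3.2 _ (List.mem_map_of_mem (f := ruleFm) hp)
    rw [ruleFm, GS.sat] at h4
    apply h4
    rw [G.sat_inPfm (hbvar (by omega))]
    have hfun := funext (ev_varS G ρ s)
    rw [hfun]
    exact hgp
  have hstep : ∀ c c' : Cfg', TM2.step tr c = some c' →
      (c.l ∈ Finset.insertNone MS) → c.l ≠ none → G.gpc c →
      (c'.l ∈ Finset.insertNone MS) ∧ c'.l ≠ none ∧ G.gpc c' := by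
    intro c c' hs hmem hlne hgpc
    have hmem' : c'.l ∈ Finset.insertNone MS :=
      @TM2.step_supports _ _ _ _ ⟨trNormal U Cont'.halt⟩ _ tr _
        (tr_supports U Cont'.halt) _ _ hs hmem
    refine ⟨hmem', ?_⟩
    rcases c with ⟨l, cv, cstk⟩
    rcases l with - | q
    · exact absurd rfl hlne
    have hqS : q ∈ MS := Finset.some_mem_insertNone.1 hmem
    have hc' : c' = TM2.stepAux (tr q) cv cstk := by
      change some (TM2.stepAux (tr q) cv cstk) = some c' at hs
      exact (Option.some.inj hs).symm
    have hone := hax' (fun k => G.emb (cstk k)) (q, cv) (pairs_mem cv hqS) hgpc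
    rw [compile_ok G (tr q) cv varS 5 _ cstk
      (fun k => ev_varS G ρ (fun k => G.emb (cstk k)) k) (hbvar (by omega))] at hone
    rw [hc']
    exact ⟨Option.isSome_iff_ne_none.1 hone.1, hone.2⟩
  have hfin : ∀ b' : Cfg', StateTransition.Reaches (TM2.step tr) (PartrecToTM2.init U [n]) b' →
      (b'.l ∈ Finset.insertNone MS) ∧ b'.l ≠ none ∧ G.gpc b' := by
    intro b' hr
    induction hr with
    | refl => exact ⟨Finset.some_mem_insertNone.2 init_mem, Option.some_ne_none _, hI0⟩
    | tail h1 h2 ih => exact hstep _ _ h2 ih.1 ih.2.1 ih.2.2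
  have hfb := hfin b hreach
  rcases b with ⟨bl, bv, bstk⟩
  rcases bl with - | q'
  · exact hfb.2.1 rfl
  · change some (TM2.stepAux (tr q') bv bstk) = none at hstop
    exact Option.some_ne_none _ hstop

end Und
namespace Und

open Turing Turing.TM2 Turing.PartrecToTM2

variable {α : Type}

/-! ### `soundR` only depends on `e` and `c` -/

theorem num_congr {G G' : GS α} (he : G.e = G'.e) (hc : G.c = G'.c) :
    ∀ i, G.num i = G'.num i
  | 0 => he
  | i + 1 => by rw [GS.num, GS.num, hc, num_congr he hc i]

theorem emb_congr {G G' : GS α} (he : G.e = G'.e) (hc : G.c = G'.c) :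
    ∀ L, G.emb L = G'.emb L
  | [] => he
  | γ :: L => by
      rw [show G.emb (γ :: L) = G.c (gbit γ).1 (G.c (gbit γ).2 (G.emb L)) from rfl,
        show G'.emb (γ :: L) = G'.c (gbit γ).1 (G'.c (gbit γ).2 (G'.emb L)) from rfl,
        hc, emb_congr he hc L]

theorem slot_congr {G G' : GS α} (hc : G.c = G'.c) (j : ℕ) (x : α) :
    G.slot j x = G'.slot j x := by rw [GS.slot, GS.slot, hc]

theorem cmp_congr {G G' : GS α} (he : G.e = G'.e) (hc : G.c = G'.c) (c : Cfg') :
    ∀ j, cmp G c j = cmp G' c j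
  | 0 => by rw [cmp, cmp, num_congr he hc]
  | 1 => by rw [cmp, cmp, emb_congr he hc]
  | 2 => by rw [cmp, cmp, emb_congr he hc]
  | 3 => by rw [cmp, cmp, emb_congr he hc]
  | (j + 4) => by
      rw [show cmp G c (j + 4) = G.emb (c.stk .stack) from rfl,
        show cmp G' c (j + 4) = G'.emb (c.stk .stack) from rfl, emb_congr he hc]

theorem soundR_congr {G G' : GS α} (he : G.e = G'.e) (hc : G.c = G'.c) (n : ℕ) :
    soundR G n = soundR G' n := by
  funext x y
  rw [soundR, soundR]
  refine propext (exists_congr fun i => exists_congr fun c => exists_congr fun j => ?_)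
  rw [num_congr he hc, slot_congr hc, cmp_congr he hc]

/-! ### Satisfiability in the datatype and codatatype theories -/

theorem satData_phi (n : ℕ) : SatData ((phiFr n).toFm) ↔ ¬ Halts n := by
  constructor
  · rintro ⟨M, ρ, hs⟩
    exact complete M.gs n ρ.vs ((sat_toFm M _ ρ).1 hs)
  · intro hn
    have hG0 : ∀ x y : Bits, (mkModel (soundR (mkModel fun _ _ => False).gs n)).gs.R x y ↔
        soundR (mkModel (soundR (mkModel fun _ _ => False).gs n)).gs n x y := by
      intro x y
      rw [mkModel_R]
      exact iff_of_eq (congrFun (congrFun (soundR_congr (G := (mkModel fun _ _ => False).gs)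
        (G' := (mkModel (soundR (mkModel fun _ _ => False).gs n)).gs) rfl rfl n) x) y)
    refine ⟨mkModel (soundR (mkModel fun _ _ => False).gs n),
      ⟨fun _ => false, fun _ => [], fun _ => .inl ([], [])⟩, ?_⟩
    rw [sat_toFm]
    exact sound _ n hn hG0 _

theorem satCo_phi (n : ℕ) : SatCo ((phiFr n).toFm) ↔ ¬ Halts n := by
  constructor
  · rintro ⟨M, ρ, hs⟩
    exact complete M.gs n ρ.vs ((cosat_toFm M _ ρ).1 hs)
  · intro hn
    have hG0 : ∀ x y : CoBits, (mkCoModel (soundR (mkCoModel fun _ _ => False).gs n)).gs.R x y ↔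
        soundR (mkCoModel (soundR (mkCoModel fun _ _ => False).gs n)).gs n x y := by
      intro x y
      rw [mkCoModel_R]
      exact iff_of_eq (congrFun (congrFun (soundR_congr (G := (mkCoModel fun _ _ => False).gs)
        (G' := (mkCoModel (soundR (mkCoModel fun _ _ => False).gs n)).gs) rfl rfl n) x) y)
    refine ⟨mkCoModel (soundR (mkCoModel fun _ _ => False).gs n),
      ⟨fun _ => false, fun _ => CoBits.nil, fun _ => .inl (CoBits.nil, CoBits.nil)⟩, ?_⟩
    rw [cosat_toFm]
    exact sound _ n hn hG0 _

theorem validData_not_iff (φ : Fm) : ValidData (.not φ) ↔ ¬ SatData φ := by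
  constructor
  · rintro h ⟨M, ρ, hs⟩
    exact h M ρ hs
  · intro h M ρ hs
    exact h ⟨M, ρ, hs⟩

theorem validCo_not_iff (φ : Fm) : ValidCo (.not φ) ↔ ¬ SatCo φ := by
  constructor
  · rintro h ⟨M, ρ, hs⟩
    exact h M ρ hs
  · intro h M ρ hs
    exact h ⟨M, ρ, hs⟩

/-! ### Closedness -/

theorem inPfm_fv (i : ℕ) (S : K' → GTm) (m : ℕ) : (inPfm i S m).fv ⊆ fvS S := by
  rw [inPfm]
  simp only [GFr.fv, fv_slotTm, fv_numTm, GTm.fv]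
  intro x hx
  rw [Finset.mem_sdiff] at hx
  obtain ⟨hx, hne⟩ := hx
  rw [Finset.mem_singleton] at hne
  simp only [Finset.mem_union, Finset.mem_singleton, Finset.notMem_empty, or_false,
    false_or] at hx
  have h0 : x ∈ (S K'.main).fv → x ∈ fvS S := fun h => fvS_le S K'.main h
  have h1 : x ∈ (S K'.rev).fv → x ∈ fvS S := fun h => fvS_le S K'.rev h
  have h2 : x ∈ (S K'.aux).fv → x ∈ fvS S := fun h => fvS_le S K'.aux h
  have h3 : x ∈ (S K'.stack).fv → x ∈ fvS S := fun h => fvS_le S K'.stack h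
  tauto

theorem fvS_varS : fvS varS = {0, 1, 2, 3} := by decide

theorem fvS_initS : fvS initS = {5} := by decide

theorem ruleFm_fv (p : Λ' × Option Γ') : (ruleFm p).fv ⊆ ({0, 1, 2, 3} : Finset ℕ) := by
  rw [ruleFm, GFr.fv]
  refine Finset.union_subset ?_ ?_
  · exact (inPfm_fv _ _ _).trans (by rw [fvS_varS])
  · exact (compile_fv _ _ _ _).trans (by rw [fvS_varS])

theorem phiFr_closed (n : ℕ) : (phiFr n).fv = ∅ := by
  have h2 : ((pairs.map ruleFm).foldr GFr.and (.eq .eps .eps)).fv ⊆ ({0, 1, 2, 3} : Finset ℕ) := by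
    refine fv_foldr_and _ _ (by decide) _ ?_
    intro f hf
    rw [List.mem_map] at hf
    obtain ⟨p, -, rfl⟩ := hf
    exact ruleFm_fv p
  rw [phiFr]
  simp only [GFr.fv, GTm.fv, fv_litTm, fv_numTm]
  apply Finset.eq_empty_of_forall_notMem
  intro x hx
  rw [Finset.mem_union] at hx
  rcases hx with hx | hx
  · simp only [Finset.mem_sdiff, Finset.mem_union, Finset.mem_singleton,
      Finset.notMem_empty, or_false, false_or] at hx
    obtain ⟨h | h, hne⟩ := hx
    · exact hne h
    · have h5 := inPfm_fv _ _ _ h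
      rw [fvS_initS, Finset.mem_singleton] at h5
      exact hne h5
  · simp only [axFm, GFr.fv, Finset.mem_sdiff, Finset.mem_singleton] at hx
    have h3 := h2 hx.1.1.1.1
    simp only [Finset.mem_insert, Finset.mem_singleton] at h3
    omega

theorem phiF_closed (n : ℕ) : Fm.Closed ((phiFr n).toFm) := by
  rw [Fm.Closed, fvF_toFm, phiFr_closed]
  rfl

theorem phiF_not_closed (n : ℕ) : Fm.Closed (Fm.not ((phiFr n).toFm)) := by
  rw [Fm.Closed, fvF]
  exact phiF_closed n

end Und
namespace Und

open Turing Turing.TM2 Turing.PartrecToTM2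

/-! ### Computability of the reduction -/

theorem encS_cb (b : Bool) (t : GTm) :
    encS (GTm.toTS (.cb b t)) = Nat.pair (cond b 3 2) (encS (GTm.toTS t)) := by
  cases b <;> rfl

theorem encS_litTm : ∀ L : List Γ', encS (GTm.toTS (litTm L)) =
    L.foldr (fun γ x => Nat.pair (cond (gbit γ).1 3 2) (Nat.pair (cond (gbit γ).2 3 2) x))
      (Nat.pair 1 0)
  | [] => rfl
  | γ :: L => by
      rw [List.foldr_cons, ← encS_litTm L,
        show litTm (γ :: L) = .cb (gbit γ).1 (.cb (gbit γ).2 (litTm L)) from rfl,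
        encS_cb, encS_cb]

theorem trPosNum_eq : ∀ p : PosNum,
    trPosNum p = (p : ℕ).bits.map fun b => cond b Γ'.bit1 Γ'.bit0
  | .one => by
      have h1 : ((PosNum.one : PosNum) : ℕ) = 1 := rfl
      have h2 : (1 : ℕ).bits = [true] := by
        rw [show (1 : ℕ) = 2 * 0 + 1 from rfl, Nat.bit1_bits, Nat.zero_bits]
      rw [h1, h2]
      rfl
  | .bit0 p => by
      have h1 : ((p.bit0 : PosNum) : ℕ) = 2 * (p : ℕ) := by
        rw [PosNum.cast_bit0]; ring
      have hne : (p : ℕ) ≠ 0 := Nat.pos_iff_ne_zero.1 (PosNum.to_nat_pos p)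
      rw [h1, Nat.bit0_bits _ hne, List.map_cons, ← trPosNum_eq p]
      rfl
  | .bit1 p => by
      have h1 : ((p.bit1 : PosNum) : ℕ) = 2 * (p : ℕ) + 1 := by
        rw [PosNum.cast_bit1]; ring
      rw [h1, Nat.bit1_bits, List.map_cons, ← trPosNum_eq p]
      rfl

theorem trNat_eq (n : ℕ) : trNat n = n.bits.map fun b => cond b Γ'.bit1 Γ'.bit0 := by
  rw [trNat]
  rcases e : (n : Num) with - | p
  · have h0 : n = 0 := by
      have h := Num.to_of_nat n
      rw [e] at h
      simpa using h.symm
    subst h0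
    rw [Nat.zero_bits]
    rfl
  · have hp : (p : ℕ) = n := by
      have h := Num.to_of_nat n
      rw [e] at h
      simpa using h
    rw [show trNum (Num.pos p) = trPosNum p from rfl, trPosNum_eq, hp]

theorem bits_rec (n : ℕ) (hn : n ≠ 0) :
    n.bits = (decide (n % 2 = 1)) :: (n / 2).bits := by
  by_cases hpar : n % 2 = 1
  · have h2 : n = 2 * (n / 2) + 1 := by omega
    have h := Nat.bit1_bits (n / 2)
    rw [← h2] at h
    rw [h, hpar]
    simp
  · have hpar0 : n % 2 = 0 := by omega
    have h2 : n = 2 * (n / 2) := by omega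
    have hne : n / 2 ≠ 0 := by omega
    have h := Nat.bit0_bits (n / 2) hne
    rw [← h2] at h
    rw [h, hpar0]
    simp

theorem primrec_bits : Primrec Nat.bits := by
  have h : Primrec₂ fun (_ : Unit) (n : ℕ) => n.bits := by
    refine Primrec.nat_strong_rec _ (g := fun (_ : Unit) (l : List (List Bool)) =>
      some (if l.length = 0 then [] else
        (decide (l.length % 2 = 1)) :: l.getD (l.length / 2) [])) ?_ ?_
    · have hg : Primrec (fun p : Unit × List (List Bool) =>
          some (if p.2.length = 0 then ([] : List Bool) else
            (decide (p.2.length % 2 = 1)) :: p.2.getD (p.2.length / 2) [])) := by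
        refine (Primrec.option_some (α := List Bool)).comp ?_
        refine Primrec.ite ?_ (Primrec.const []) ?_
        · exact Primrec.eq.comp (Primrec.list_length.comp Primrec.snd) (Primrec.const 0)
        · refine (Primrec.list_cons (α := Bool)).comp ?_ ?_
          · exact (Primrec.eq.comp
              (Primrec.nat_mod.comp ((Primrec.list_length (α := List Bool)).comp (Primrec.snd (α := Unit) (β := List (List Bool)))) (Primrec.const 2))
              (Primrec.const 1)).decide
          · exact (Primrec.list_getD ([] : List Bool)).comp Primrec.snd
              (Primrec.nat_div.comp (Primrec.list_length.comp Primrec.snd) (Primrec.const 2))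
      exact hg.to₂
    · intro a n
      simp only [List.length_map, List.length_range]
      by_cases hn : n = 0
      · subst hn
        rw [if_pos rfl, Nat.zero_bits]
      · rw [if_neg hn]
        have hlt : n / 2 < n := Nat.div_lt_self (Nat.pos_of_ne_zero hn) one_lt_two
        have hget : ((List.range n).map Nat.bits).getD (n / 2) [] = Nat.bits (n / 2) := by
          rw [List.getD_eq_getElem?_getD, List.getElem?_map, List.getElem?_range hlt]
          rfl
        rw [hget, ← bits_rec n hn]
  exact (h.comp (Primrec.const ()) Primrec.id).of_eq fun n => rfl

def Wfn (n : ℕ) : ℕ :=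
  (n.bits).foldr (fun b x => Nat.pair 3 (Nat.pair (cond b 3 2) x))
    (Nat.pair 2 (Nat.pair 3 (Nat.pair 1 0)))

theorem primrec_W : Primrec Wfn :=
  Primrec.list_foldr primrec_bits (Primrec.const _) <|
    Primrec.to₂ <| Primrec₂.natPair.comp (Primrec.const 3)
      (Primrec₂.natPair.comp
        (Primrec.cond (Primrec.fst.comp Primrec.snd) (Primrec.const 3) (Primrec.const 2))
        (Primrec.snd.comp Primrec.snd))

theorem N_eq (n : ℕ) : encS (GTm.toTS (litTm (trList [n]))) = Wfn n := by
  rw [encS_litTm, show trList [n] = trNat n ++ [Γ'.cons] from rfl, List.foldr_append, trNat_eq,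
    List.foldr_map, Wfn]
  congr 1
  · funext b x
    cases b <;> rfl

theorem encF_phiF (n : ℕ) : encF ((phiFr n).toFm) =
    Nat.pair 4 (Nat.pair
      (Nat.pair 8 (Nat.pair 5 (Nat.pair 4 (Nat.pair
        (Nat.pair 1 (Nat.pair (Nat.pair 0 5) (encS (GTm.toTS (litTm (trList [n]))))))
        (encF ((inPfm idx0 initS 6).toFm))))))
      (encF (axFm.toFm))) := rfl

theorem primrec_encPhi : Primrec fun n => encF ((phiFr n).toFm) := by
  have h : Primrec fun n => Nat.pair 4 (Nat.pair
      (Nat.pair 8 (Nat.pair 5 (Nat.pair 4 (Nat.pair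
        (Nat.pair 1 (Nat.pair (Nat.pair 0 5) (Wfn n)))
        (encF ((inPfm idx0 initS 6).toFm))))))
      (encF (axFm.toFm))) :=
    Primrec₂.natPair.comp (Primrec.const 4) (Primrec₂.natPair.comp
      (Primrec₂.natPair.comp (Primrec.const 8) (Primrec₂.natPair.comp (Primrec.const 5)
        (Primrec₂.natPair.comp (Primrec.const 4) (Primrec₂.natPair.comp
          (Primrec₂.natPair.comp (Primrec.const 1) (Primrec₂.natPair.comp
            (Primrec.const (Nat.pair 0 5)) primrec_W))
          (Primrec.const (encF ((inPfm idx0 initS 6).toFm)))))))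
      (Primrec.const (encF (axFm.toFm))))
  exact h.of_eq fun n => by rw [encF_phiF, N_eq]

theorem primrec_encPhiNot : Primrec fun n => encF (Fm.not ((phiFr n).toFm)) :=
  Primrec₂.natPair.comp (Primrec.const 3) primrec_encPhi

end Und

theorem codatatypes_undecidable' :
    (¬ ∃ f : ℕ → Bool, Computable f ∧
        ∀ φ : Fm, φ.Closed → (f (encF φ) = true ↔ ValidData φ)) ∧
    (¬ ∃ f : ℕ → Bool, Computable f ∧
        ∀ φ : Fm, (f (encF φ) = true ↔ SatData φ)) ∧
    (¬ ∃ f : ℕ → Bool, Computable f ∧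
        ∀ φ : Fm, φ.Closed → (f (encF φ) = true ↔ ValidCo φ)) ∧
    (¬ ∃ f : ℕ → Bool, Computable f ∧
        ∀ φ : Fm, (f (encF φ) = true ↔ SatCo φ)) := by
  have hW : Computable fun n => encF ((Und.phiFr n).toFm) := Und.primrec_encPhi.to_comp
  have hWn : Computable fun n => encF (Fm.not ((Und.phiFr n).toFm)) :=
    Und.primrec_encPhiNot.to_comp
  refine ⟨?_, ?_, ?_, ?_⟩
  · rintro ⟨f, hf, hiff⟩
    apply Und.halts_undec
    refine ComputablePred.computable_iff.2
      ⟨fun n => f (encF (Fm.not ((Und.phiFr n).toFm))), hf.comp hWn, ?_⟩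
    funext n
    have h1 := hiff (Fm.not ((Und.phiFr n).toFm)) (Und.phiF_not_closed n)
    have h2 : ValidData (Fm.not ((Und.phiFr n).toFm)) ↔ Und.Halts n := by
      rw [Und.validData_not_iff (Und.phiFr n).toFm]
      rw [Und.satData_phi n]
      exact not_not
    exact propext (h2.symm.trans h1.symm)
  · rintro ⟨f, hf, hiff⟩
    have hcp : ComputablePred fun n => ¬ Und.Halts n := by
      refine ComputablePred.computable_iff.2
        ⟨fun n => f (encF ((Und.phiFr n).toFm)), hf.comp hW, ?_⟩
      funext n
      exact propext ((Und.satData_phi n).symm.trans (hiff ((Und.phiFr n).toFm)).symm)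
    exact Und.halts_undec (hcp.not.of_eq fun n => not_not)
  · rintro ⟨f, hf, hiff⟩
    apply Und.halts_undec
    refine ComputablePred.computable_iff.2
      ⟨fun n => f (encF (Fm.not ((Und.phiFr n).toFm))), hf.comp hWn, ?_⟩
    funext n
    have h1 := hiff (Fm.not ((Und.phiFr n).toFm)) (Und.phiF_not_closed n)
    have h2 : ValidCo (Fm.not ((Und.phiFr n).toFm)) ↔ Und.Halts n := by
      rw [Und.validCo_not_iff (Und.phiFr n).toFm]
      rw [Und.satCo_phi n]
      exact not_not
    exact propext (h2.symm.trans h1.symm)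
  · rintro ⟨f, hf, hiff⟩
    have hcp : ComputablePred fun n => ¬ Und.Halts n := by
      refine ComputablePred.computable_iff.2
        ⟨fun n => f (encF ((Und.phiFr n).toFm)), hf.comp hW, ?_⟩
      funext n
      exact propext ((Und.satCo_phi n).symm.trans (hiff ((Und.phiFr n).toFm)).symm)
    exact Und.halts_undec (hcp.not.of_eq fun n => not_not)

/-- The first-order theory of algebraic (co)datatypes is
undecidable: for the signature `bool = True | False`,
`bitstring = e | 0(tail₀) | 1(tail₁)`, `dummy = f(b₁, b₂) | g(h)`, no algorithm
(no computable function on Gödel numbers of formulae) decides whether a given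
sentence is valid in the theory of datatypes; equivalently, satisfiability of
first-order formulae in this theory is undecidable. The same holds when the
declarations are read as codatatype declarations. -/
theorem codatatypes_undecidable :
    (¬ ∃ f : ℕ → Bool, Computable f ∧
        ∀ φ : Fm, φ.Closed → (f (encF φ) = true ↔ ValidData φ)) ∧
    (¬ ∃ f : ℕ → Bool, Computable f ∧
        ∀ φ : Fm, (f (encF φ) = true ↔ SatData φ)) ∧
    (¬ ∃ f : ℕ → Bool, Computable f ∧
        ∀ φ : Fm, φ.Closed → (f (encF φ) = true ↔ ValidCo φ)) ∧
    (¬ ∃ f : ℕ → Bool, Computable f ∧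
        ∀ φ : Fm, (f (encF φ) = true ↔ SatCo φ)) := by
  exact codatatypes_undecidable'
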